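/- Let R be a Dedekind domain with field of fractions K, let ι: K → A_{R,K} be the canonical (diagonal) embedding of K into the finite adèle ring, and let κ: ∏_v O_v → A_{R,K} be the canonical embedding of the finite integral adèles. Then the sequence of R-modules 0 → R → K × ∏_v O_v → A_{R,K} → 0 is exact, where the first map sends r to (r, r) and the second sends (f, o) to ι(f) − κ(o). Explicitly: (i) an element f ∈ K with ι(f) ∈ κ(∏_v O_v) lies in R, so ι(K) ∩ κ(∏_v O_v) is the image of R; and (ii) every finite adèle is a sum ι(f) + κ(o) with f ∈ K and o ∈ ∏_v O_v, i.e. ι(K) + κ(∏_v O_v) = A_{R,K}. (This is Beilinson's adelic resolution of the structure sheaf in the case of the affine curve Spec R.) -/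

import Mathlib

namespace DedekindDomain

open IsDedekindDomain

/-- The finite integral adèles `∏_v O_v` (removed from Mathlib; restored with its old meaning). -/
def FiniteIntegralAdeles (R K : Type*) [CommRing R] [IsDedekindDomain R] [Field K]
    [Algebra R K] [IsFractionRing R K] : Type _ :=
  ∀ v : HeightOneSpectrum R, v.adicCompletionIntegers K

noncomputable instance (R K : Type*) [CommRing R] [IsDedekindDomain R] [Field K]
    [Algebra R K] [IsFractionRing R K] : CommRing (FiniteIntegralAdeles R K) :=
  inferInstanceAs (CommRing (∀ v : HeightOneSpectrum R, v.adicCompletionIntegers K))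

/-- The canonical embedding `∏_v O_v → A_{R,K}`, as in the old Mathlib. -/
noncomputable def FiniteIntegralAdeles.toFiniteAdeleRing (R K : Type*) [CommRing R]
    [IsDedekindDomain R] [Field K] [Algebra R K] [IsFractionRing R K] :
    FiniteIntegralAdeles R K →+* FiniteAdeleRing R K where
  toFun r := ⟨fun v => (r v : v.adicCompletion K), Filter.Eventually.of_forall fun v => (r v).2⟩
  map_one' := rfl
  map_mul' _ _ := rfl
  map_zero' := rfl
  map_add' _ _ := rfl

noncomputable instance (R K : Type*) [CommRing R] [IsDedekindDomain R] [Field K]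
    [Algebra R K] [IsFractionRing R K] :
    Algebra (FiniteIntegralAdeles R K) (FiniteAdeleRing R K) :=
  (FiniteIntegralAdeles.toFiniteAdeleRing R K).toAlgebra

end DedekindDomain

section AuxiliaryLemmas

open DedekindDomain IsDedekindDomain IsDedekindDomain.HeightOneSpectrum
open scoped Multiplicative nonZeroDivisors WithZero

variable {R K : Type*} [CommRing R] [IsDedekindDomain R] [Field K] [Algebra R K]
  [IsFractionRing R K]

/-- If d, a are nonzero elements of R whose intValuations satisfy
  intVal a ≤ intVal d at every height one prime, then d ∣ a. -/
theorem aux_dvd_of_intVal_le (a d : R) (ha : a ≠ 0) (hd : d ≠ 0)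
    (h : ∀ v : HeightOneSpectrum R, v.intValuationDef a ≤ v.intValuationDef d) : d ∣ a := by
  classical
  rw [← Ideal.span_singleton_le_span_singleton, ← Ideal.dvd_iff_le, ← Associates.mk_dvd_mk]
  rw [congr_fun₂ Associates.dvd_eq_le, ← Associates.factors_le]
  have hd' : Associates.mk (Ideal.span {d} : Ideal R) ≠ 0 := by
    rw [Associates.mk_ne_zero, Ne, Ideal.zero_eq_bot, Ideal.span_singleton_eq_bot]; exact hd
  have ha' : Associates.mk (Ideal.span {a} : Ideal R) ≠ 0 := by
    rw [Associates.mk_ne_zero, Ne, Ideal.zero_eq_bot, Ideal.span_singleton_eq_bot]; exact ha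
  obtain ⟨sd, hsd⟩ := Associates.factors_eq_some_iff_ne_zero.mpr hd'
  obtain ⟨sa, hsa⟩ := Associates.factors_eq_some_iff_ne_zero.mpr ha'
  rw [hsd, hsa, WithTop.coe_le_coe, Multiset.le_iff_count]
  rintro ⟨p, hp⟩
  obtain ⟨I, rfl⟩ := Associates.mk_surjective p
  have hI : Prime I := UniqueFactorizationMonoid.irreducible_iff_prime.mp
    (Associates.irreducible_mk.mp hp)
  set v : HeightOneSpectrum R := ⟨I, Ideal.isPrime_of_prime hI, by
    simpa [Ne, Ideal.zero_eq_bot] using hI.ne_zero⟩ with hv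
  have hkey := h v
  rw [intValuationDef_if_neg _ ha, intValuationDef_if_neg _ hd, WithZero.exp_le_exp,
    neg_le_neg_iff, Int.ofNat_le] at hkey
  have hcd : (Associates.mk v.asIdeal).count (Associates.mk (Ideal.span {d} : Ideal R)).factors
      = sd.count ⟨Associates.mk I, hp⟩ := by
    rw [hsd]; exact Associates.count_some hp sd
  have hca : (Associates.mk v.asIdeal).count (Associates.mk (Ideal.span {a} : Ideal R)).factors
      = sa.count ⟨Associates.mk I, hp⟩ := by
    rw [hsa]; exact Associates.count_some hp sa
  rw [hcd, hca] at hkey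
  exact hkey

theorem aux_mem_range_of_valuation_le_one (x : K)
    (h : ∀ v : HeightOneSpectrum R, v.valuation K x ≤ 1) :
    ∃ r : R, algebraMap R K r = x := by
  obtain ⟨⟨a, d⟩, rfl⟩ := IsLocalization.mk'_surjective R⁰ x
  have hd0 : (d : R) ≠ 0 := nonZeroDivisors.ne_zero d.2
  rcases eq_or_ne a 0 with rfl | ha0
  · exact ⟨0, by simp⟩
  have hint : ∀ v : HeightOneSpectrum R, v.intValuationDef a ≤ v.intValuationDef (d : R) := by
    intro v
    have := h v
    rw [valuation_of_mk'] at this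
    have hdne : v.intValuation (d : R) ≠ 0 := v.intValuation_ne_zero _ hd0
    rw [div_le_one₀ (lt_of_le_of_ne (zero_le') (Ne.symm hdne))] at this
    simpa [intValuation_apply] using this
  obtain ⟨z, rfl⟩ := aux_dvd_of_intVal_le a d ha0 hd0 hint
  refine ⟨z, ?_⟩
  rw [eq_comm, IsLocalization.mk'_eq_iff_eq_mul, map_mul, mul_comm]

theorem aux_approx (v : HeightOneSpectrum R) (k : K) (hk : v.valuation K k ≤ 1) (n : ℕ) :
    ∃ r : R, v.valuation K (k - algebraMap R K r) ≤
      WithZero.exp (-(n : ℤ)) := by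
  classical
  obtain ⟨⟨a, d⟩, rfl⟩ := IsLocalization.mk'_surjective R⁰ k
  have hd0 : (d : R) ≠ 0 := nonZeroDivisors.ne_zero d.2
  rcases eq_or_ne a 0 with rfl | ha0
  · exact ⟨0, by simp⟩
  set m := (Associates.mk v.asIdeal).count (Associates.mk (Ideal.span {(d : R)} : Ideal R)).factors
    with hm
  have hdval : v.intValuationDef (d : R) =
      WithZero.exp (-(m : ℤ)) :=
    intValuationDef_if_neg v hd0
  have hale : v.intValuationDef a ≤ v.intValuationDef (d : R) := by
    have := hk
    rw [valuation_of_mk'] at this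
    have hdne : v.intValuation (d : R) ≠ 0 := v.intValuation_ne_zero _ hd0
    rw [div_le_one₀ (lt_of_le_of_ne (zero_le') (Ne.symm hdne))] at this
    simpa [intValuation_apply] using this
  have ha_mem : a ∈ v.asIdeal ^ m := by
    rw [← Ideal.dvd_span_singleton, ← v.intValuation_le_pow_iff_dvd]
    exact hale.trans_eq hdval
  -- the sup is v ^ j with j ≤ m
  have hGdvd : (Ideal.span {(d : R)} ⊔ v.asIdeal ^ (m + n)) ∣ v.asIdeal ^ (m + n) :=
    Ideal.dvd_iff_le.mpr le_sup_right
  obtain ⟨j, hjle, hGeq⟩ := (dvd_prime_pow v.prime (m + n)).mp hGdvd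
  rw [associated_iff_eq] at hGeq
  have hjm : j ≤ m := by
    have hdvd : v.asIdeal ^ j ∣ Ideal.span {(d : R)} := by
      rw [← hGeq]
      exact Ideal.dvd_iff_le.mpr le_sup_left
    have := (v.intValuation_le_pow_iff_dvd (d : R) j).mpr hdvd
    rw [intValuation_apply, hdval, WithZero.exp_le_exp,
      neg_le_neg_iff, Int.ofNat_le] at this
    exact this
  have ha_memG : a ∈ Ideal.span {(d : R)} ⊔ v.asIdeal ^ (m + n) := by
    rw [hGeq]
    exact Ideal.pow_le_pow_right hjm ha_mem
  obtain ⟨y, hy, z, hz, hyz⟩ := Submodule.mem_sup.mp ha_memG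
  obtain ⟨t, rfl⟩ := Ideal.mem_span_singleton.mp hy
  refine ⟨t, ?_⟩
  have hzval : v.intValuationDef z ≤
      WithZero.exp (-((m + n : ℕ) : ℤ)) := by
    rw [← intValuation_apply, v.intValuation_le_pow_iff_dvd, Ideal.dvd_span_singleton]
    exact hz
  have hmk : IsLocalization.mk' K a d - algebraMap R K t = IsLocalization.mk' K z d := by
    rw [IsFractionRing.mk'_eq_div, IsFractionRing.mk'_eq_div]
    have hdK : algebraMap R K (d : R) ≠ 0 :=
      fun h => hd0 (IsFractionRing.injective R K (by rwa [map_zero]))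
    field_simp
    rw [← map_mul, ← map_sub, ← hyz]
    ring_nf
  rw [hmk, valuation_of_mk']
  have hdne : v.intValuation (d : R) ≠ 0 := v.intValuation_ne_zero _ hd0
  rw [intValuation_apply, intValuation_apply, hdval]
  calc v.intValuationDef z / WithZero.exp (-(m : ℤ))
      ≤ WithZero.exp (-((m + n : ℕ) : ℤ)) /
        WithZero.exp (-(m : ℤ)) := by
        rw [div_eq_mul_inv, div_eq_mul_inv]
        exact mul_le_mul_left hzval _
    _ = WithZero.exp (-(n : ℤ)) := by
        rw [← WithZero.exp_sub]
        congr 1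
        push_cast
        ring

theorem aux_dense (v : HeightOneSpectrum R) (x : v.adicCompletion K)
    (hx : Valued.v x ≤ 1) (n : ℕ) :
    ∃ r : R, Valued.v (x - algebraMap R (v.adicCompletion K) r) ≤
      WithZero.exp (-(n : ℤ)) := by
  obtain ⟨π, hπ, hπ0⟩ := Submodule.exists_mem_ne_zero_of_ne_bot
    (show v.asIdeal ^ n ≠ ⊥ from pow_ne_zero n v.ne_bot)
  set t : v.adicCompletion K := algebraMap R (v.adicCompletion K) π with htdef
  have ht : Valued.v t ≤ WithZero.exp (-(n : ℤ)) := by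
    rw [htdef, show algebraMap R (v.adicCompletion K) π =
      ((algebraMap R K π : K) : v.adicCompletion K) from rfl,
      valuedAdicCompletion_eq_valuation', valuation_of_algebraMap,
      v.intValuation_le_pow_iff_dvd, Ideal.dvd_span_singleton]
    exact hπ
  have ht0 : Valued.v t ≠ 0 := by
    rw [Ne, Valuation.zero_iff]
    exact (map_ne_zero (algebraMap K (v.adicCompletion K))).mpr
      ((map_ne_zero_iff _ (IsFractionRing.injective R K)).mpr hπ0)
  have hU : {y : v.adicCompletion K | Valued.v (y - x + t) = Valued.v t} ∈ nhds x := by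
    have hc : Continuous (fun y : v.adicCompletion K => y - x + t) := by fun_prop
    refine hc.continuousAt.preimage_mem_nhds (t := {y | Valued.v y = Valued.v t}) ?_
    rw [sub_self, zero_add]
    exact Valued.locally_const ht0
  obtain ⟨k, hk⟩ := (denseRange_algebraMap K v).mem_nhds hU
  have hk0 : Valued.v ((k : v.adicCompletion K) - x + t) = Valued.v t := hk
  have hk' : Valued.v ((k : v.adicCompletion K) - x) ≤ WithZero.exp (-(n : ℤ)) := by
    calc Valued.v ((k : v.adicCompletion K) - x)
        = Valued.v (((k : v.adicCompletion K) - x + t) - t) := by ring_nf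
      _ ≤ max (Valued.v ((k : v.adicCompletion K) - x + t)) (Valued.v t) :=
          Valuation.map_sub _ _ _
      _ ≤ _ := by rw [hk0, max_self]; exact ht
  have hγle : WithZero.exp (-(n : ℤ)) ≤ 1 := by
    rw [← WithZero.exp_zero, WithZero.exp_le_exp]
    omega
  have hkval : v.valuation K k ≤ 1 := by
    rw [← valuedAdicCompletion_eq_valuation']
    calc Valued.v (k : v.adicCompletion K)
        = Valued.v (((k : v.adicCompletion K) - x) + x) := by ring_nf
      _ ≤ max (Valued.v ((k : v.adicCompletion K) - x)) (Valued.v x) := Valuation.map_add _ _ _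
      _ ≤ 1 := max_le (le_trans hk' hγle) hx
  obtain ⟨r, hr⟩ := aux_approx v k hkval n
  refine ⟨r, ?_⟩
  have hxr : x - algebraMap R (v.adicCompletion K) r =
      (x - (k : v.adicCompletion K)) + ((k - algebraMap R K r : K) : v.adicCompletion K) := by
    rw [show ((k - algebraMap R K r : K) : v.adicCompletion K) =
      algebraMap K (v.adicCompletion K) (k - algebraMap R K r) from rfl, map_sub]
    rw [show algebraMap K (v.adicCompletion K) (algebraMap R K r) =
      algebraMap R (v.adicCompletion K) r from rfl]
    change x - _ = (x - algebraMap K (v.adicCompletion K) k) + _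
    ring
  rw [hxr]
  calc Valued.v ((x - (k : v.adicCompletion K)) +
        ((k - algebraMap R K r : K) : v.adicCompletion K))
      ≤ max (Valued.v (x - (k : v.adicCompletion K)))
        (Valued.v (((k - algebraMap R K r : K) : v.adicCompletion K))) := Valuation.map_add _ _ _
    _ ≤ WithZero.exp (-(n : ℤ)) := by
        apply max_le
        · rw [← Valuation.map_neg, neg_sub]
          exact hk'
        · rw [valuedAdicCompletion_eq_valuation']
          exact hr

theorem aux_exists_mul (a : FiniteAdeleRing R K) :
    ∃ (b : R⁰) (c : FiniteIntegralAdeles R K), ∀ v : HeightOneSpectrum R,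
      a v * algebraMap R (v.adicCompletion K) (b : R) = (c v : v.adicCompletion K) := by
  classical
  have hfin : {v : HeightOneSpectrum R | ¬ a v ∈ v.adicCompletionIntegers K}.Finite :=
    Filter.eventually_cofinite.mp a.2
  choose g hg0 hg using fun v : HeightOneSpectrum R =>
    adicCompletion.mul_nonZeroDivisor_mem_adicCompletionIntegers v (a v)
  let b : R⁰ := ∏ v ∈ hfin.toFinset, ⟨g v, hg0 v⟩
  have hb : ∀ v : HeightOneSpectrum R,
      a v * algebraMap R (v.adicCompletion K) (b : R) ∈ v.adicCompletionIntegers K := by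
    intro v
    by_cases hv : v ∈ hfin.toFinset
    · have hb' : b = ⟨g v, hg0 v⟩ * ∏ w ∈ hfin.toFinset.erase v, ⟨g w, hg0 w⟩ :=
        (Finset.mul_prod_erase _ _ hv).symm
      rw [hb', Submonoid.coe_mul, map_mul, ← mul_assoc, Submonoid.coe_finset_prod, map_prod]
      exact mul_mem (hg v) (prod_mem fun w _ => v.coe_mem_adicCompletionIntegers (g w))
    · have ha : a v ∈ v.adicCompletionIntegers K := by
        simpa [hfin.mem_toFinset] using hv
      exact mul_mem ha (v.coe_mem_adicCompletionIntegers _)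
  exact ⟨b, fun v => ⟨_, hb v⟩, fun v => rfl⟩

open FiniteAdeleRing in
theorem aux_decomp (a : FiniteAdeleRing R K) :
    ∃ (f : K) (o : FiniteIntegralAdeles R K),
      a = algebraMap K (FiniteAdeleRing R K) f +
        algebraMap (FiniteIntegralAdeles R K) (FiniteAdeleRing R K) o := by
  classical
  obtain ⟨b, c, hbc⟩ := aux_exists_mul a
  have hb0 : (b : R) ≠ 0 := nonZeroDivisors.ne_zero b.2
  have hcomp : ∀ v : HeightOneSpectrum R,
      a v * algebraMap R (v.adicCompletion K) (b : R) = (c v : v.adicCompletion K) := by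
    intro v
    exact hbc v
  -- approximate each `c v` by an element of `R` to precision the `v`-adic valuation of `b`
  set nv : HeightOneSpectrum R → ℕ := fun v =>
    (Associates.mk v.asIdeal).count (Associates.mk (Ideal.span {(b : R)} : Ideal R)).factors
    with hnv
  have hbval : ∀ v : HeightOneSpectrum R, v.intValuationDef (b : R) =
      WithZero.exp (-(nv v : ℤ)) := fun v =>
    intValuationDef_if_neg v hb0
  have H : ∀ v : HeightOneSpectrum R, ∃ ρ : R,
      Valued.v ((c v : v.adicCompletion K) - algebraMap R (v.adicCompletion K) ρ) ≤
        WithZero.exp (-(nv v : ℤ)) := fun v =>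
    aux_dense v (c v : v.adicCompletion K) (c v).2 (nv v)
  choose ρ hρ using H
  -- the finite set of primes dividing `b`
  have hfin : {v : HeightOneSpectrum R | v.asIdeal ∣ Ideal.span {(b : R)}}.Finite := by
    have := Ideal.finite_factors (I := (Ideal.span {(b : R)} : Ideal R))
      (by rw [Ne, Ideal.zero_eq_bot, Ideal.span_singleton_eq_bot]; exact hb0)
    exact this
  set s : Finset (HeightOneSpectrum R) := hfin.toFinset with hs
  -- CRT
  obtain ⟨r, hr⟩ := IsDedekindDomain.exists_forall_sub_mem_ideal
    (s := s) (fun v => v.asIdeal) (fun v => nv v)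
    (fun v _ => v.prime)
    (fun i _ j _ hij h => hij (by ext1; exact h))
    (fun v => ρ v)
  -- the key estimate
  have key : ∀ v : HeightOneSpectrum R,
      Valued.v ((c v : v.adicCompletion K) - algebraMap R (v.adicCompletion K) r) ≤
        WithZero.exp (-(nv v : ℤ)) := by
    intro v
    by_cases hvs : v ∈ s
    · have h1 := hρ v
      have h2 : r - ρ v ∈ v.asIdeal ^ (nv v) := hr v hvs
      have h3 : Valued.v (algebraMap R (v.adicCompletion K) r -
          algebraMap R (v.adicCompletion K) (ρ v)) ≤
          WithZero.exp (-(nv v : ℤ)) := by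
        rw [← RingHom.map_sub]
        have : algebraMap R (v.adicCompletion K) (r - ρ v) =
            ((algebraMap R K (r - ρ v) : K) : v.adicCompletion K) := rfl
        rw [this, valuedAdicCompletion_eq_valuation', valuation_of_algebraMap]
        rw [v.intValuation_le_pow_iff_dvd, Ideal.dvd_span_singleton]
        exact h2
      calc Valued.v ((c v : v.adicCompletion K) - algebraMap R (v.adicCompletion K) r)
          = Valued.v (((c v : v.adicCompletion K) - algebraMap R (v.adicCompletion K) (ρ v)) -
            (algebraMap R (v.adicCompletion K) r - algebraMap R (v.adicCompletion K) (ρ v))) := by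
            ring_nf
        _ ≤ max (Valued.v ((c v : v.adicCompletion K) -
              algebraMap R (v.adicCompletion K) (ρ v)))
            (Valued.v (algebraMap R (v.adicCompletion K) r -
              algebraMap R (v.adicCompletion K) (ρ v))) := Valuation.map_sub _ _ _
        _ ≤ _ := max_le h1 h3
    · have hnv0 : nv v = 0 := by
        have : ¬ v.asIdeal ∣ Ideal.span {(b : R)} := by
          intro hdvd
          exact hvs (by rw [hs]; exact hfin.mem_toFinset.mpr hdvd)
        by_contra hne
        exact this ((Associates.count_ne_zero_iff_dvd
          (by rw [Ne, Ideal.zero_eq_bot, Ideal.span_singleton_eq_bot]; exact hb0)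
          (v.irreducible)).mp hne)
      rw [hnv0]
      simp only [Nat.cast_zero, neg_zero, WithZero.exp_zero]
      calc Valued.v ((c v : v.adicCompletion K) - algebraMap R (v.adicCompletion K) r)
          ≤ max (Valued.v (c v : v.adicCompletion K))
            (Valued.v (algebraMap R (v.adicCompletion K) r)) := Valuation.map_sub _ _ _
        _ ≤ 1 := by
            apply max_le (c v).2
            exact v.coe_mem_adicCompletionIntegers r
  -- now define `f = r / b` and the integral part
  set f : K := algebraMap R K r / algebraMap R K (b : R) with hf
  have hbK : ∀ v : HeightOneSpectrum R,
      algebraMap R (v.adicCompletion K) (b : R) ≠ 0 := by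
    intro v h
    have : ((algebraMap R K (b : R) : K) : v.adicCompletion K) = 0 := h
    rw [show ((algebraMap R K (b : R) : K) : v.adicCompletion K) =
      algebraMap K (v.adicCompletion K) (algebraMap R K (b : R)) from rfl] at this
    have hb : algebraMap R K (b : R) = 0 := by
      apply (algebraMap K (v.adicCompletion K)).injective
      rw [this, map_zero]
    exact hb0 (IsFractionRing.injective R K (by rwa [map_zero]))
  have hbvalK : ∀ v : HeightOneSpectrum R,
      Valued.v (algebraMap R (v.adicCompletion K) (b : R)) =
        WithZero.exp (-(nv v : ℤ)) := by
    intro v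
    rw [show algebraMap R (v.adicCompletion K) (b : R) =
      ((algebraMap R K (b : R) : K) : v.adicCompletion K) from rfl,
      valuedAdicCompletion_eq_valuation', valuation_of_algebraMap, intValuation_apply]
    exact hbval v
  have havb : ∀ v : HeightOneSpectrum R,
      a v = (c v : v.adicCompletion K) * (algebraMap R (v.adicCompletion K) (b : R))⁻¹ := by
    intro v
    field_simp [hbK v]
    exact hcomp v
  have hfv : ∀ v : HeightOneSpectrum R,
      algebraMap K (v.adicCompletion K) f =
        algebraMap R (v.adicCompletion K) r *
          (algebraMap R (v.adicCompletion K) (b : R))⁻¹ := by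
    intro v
    rw [hf, map_div₀]
    rfl
  have hintegral : ∀ v : HeightOneSpectrum R,
      a v - algebraMap K (v.adicCompletion K) f ∈ v.adicCompletionIntegers K := by
    intro v
    rw [mem_adicCompletionIntegers, havb v, hfv v, ← sub_mul, Valuation.map_mul, map_inv₀,
      hbvalK v]
    have := key v
    calc Valued.v ((c v : v.adicCompletion K) - algebraMap R (v.adicCompletion K) r) *
        (WithZero.exp (-(nv v : ℤ)))⁻¹
        ≤ WithZero.exp (-(nv v : ℤ)) *
          (WithZero.exp (-(nv v : ℤ)))⁻¹ :=
          mul_le_mul_left this _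
      _ = 1 := mul_inv_cancel₀ WithZero.exp_ne_zero
  set o : FiniteIntegralAdeles R K := fun v =>
    (⟨a v - algebraMap K (v.adicCompletion K) f, hintegral v⟩ : v.adicCompletionIntegers K)
    with ho
  refine ⟨f, o, ?_⟩
  apply FiniteAdeleRing.ext
  intro v
  show a v = algebraMap K (v.adicCompletion K) f +
    (a v - algebraMap K (v.adicCompletion K) f)
  ring

end AuxiliaryLemmas

open DedekindDomain IsDedekindDomain

variable (R K : Type*) [CommRing R] [IsDedekindDomain R] [Field K] [Algebra R K]
  [IsFractionRing R K]

/-- The `R`-algebra structure on the finite integral adèles `∏_v O_v`, obtained from the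
`R`-algebra structures on the individual completions `O_v`. -/
noncomputable instance : Algebra R (FiniteIntegralAdeles R K) :=
  inferInstanceAs (Algebra R (∀ v : HeightOneSpectrum R, v.adicCompletionIntegers K))

/-- The sequence `0 → R → K × ∏_v O_v → A_{R,K} → 0` is exact, where the
first map is `r ↦ (r, r)` and the second is `(f, o) ↦ ι f - κ o`, with `ι : K → A_{R,K}` the
diagonal embedding and `κ : ∏_v O_v → A_{R,K}` the canonical embedding of the finite integral
adèles.  In particular `ι(K) ∩ κ(∏_v O_v)` is the image of `R`, and
`ι(K) + κ(∏_v O_v) = A_{R,K}`. -/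
theorem stmt10 :
    Function.Injective
      (fun r : R =>
        ((algebraMap R K r, algebraMap R (FiniteIntegralAdeles R K) r) :
          K × FiniteIntegralAdeles R K)) ∧
    Function.Exact
      (fun r : R =>
        ((algebraMap R K r, algebraMap R (FiniteIntegralAdeles R K) r) :
          K × FiniteIntegralAdeles R K))
      (fun p : K × FiniteIntegralAdeles R K =>
        algebraMap K (FiniteAdeleRing R K) p.1 -
          algebraMap (FiniteIntegralAdeles R K) (FiniteAdeleRing R K) p.2) ∧
    Function.Surjective
      (fun p : K × FiniteIntegralAdeles R K =>
        algebraMap K (FiniteAdeleRing R K) p.1 -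
          algebraMap (FiniteIntegralAdeles R K) (FiniteAdeleRing R K) p.2) := by
  refine ⟨?_, ?_, ?_⟩
  · intro x y h
    exact IsFractionRing.injective R K (congrArg Prod.fst h)
  · rintro ⟨k, o⟩
    constructor
    · intro h
      have heq : algebraMap K (FiniteAdeleRing R K) k =
          algebraMap (FiniteIntegralAdeles R K) (FiniteAdeleRing R K) o := by
        rwa [sub_eq_zero] at h
      have hcomp : ∀ v : IsDedekindDomain.HeightOneSpectrum R,
          algebraMap K (v.adicCompletion K) k = ((o v : v.adicCompletion K)) := by
        intro v
        exact congrArg (fun x : FiniteAdeleRing R K => x v) heq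
      have hval : ∀ v : IsDedekindDomain.HeightOneSpectrum R, v.valuation K k ≤ 1 := by
        intro v
        rw [← IsDedekindDomain.HeightOneSpectrum.valuedAdicCompletion_eq_valuation']
        rw [show ((k : K) : v.adicCompletion K) = algebraMap K (v.adicCompletion K) k from rfl,
          hcomp v]
        exact (o v).2
      obtain ⟨r, hr⟩ := aux_mem_range_of_valuation_le_one k hval
      refine ⟨r, ?_⟩
      refine Prod.ext hr ?_
      funext v
      apply Subtype.ext
      show ((algebraMap R K r : K) : v.adicCompletion K) = (o v : v.adicCompletion K)
      rw [hr]
      exact hcomp v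
    · rintro ⟨r, hrr⟩
      obtain ⟨rfl, rfl⟩ : algebraMap R K r = k ∧ algebraMap R (FiniteIntegralAdeles R K) r = o :=
        ⟨congrArg Prod.fst hrr, congrArg Prod.snd hrr⟩
      show algebraMap K (FiniteAdeleRing R K) (algebraMap R K r) -
        algebraMap (FiniteIntegralAdeles R K) (FiniteAdeleRing R K)
          (algebraMap R (FiniteIntegralAdeles R K) r) = 0
      rw [sub_eq_zero]
      apply FiniteAdeleRing.ext
      intro v
      rfl
  · intro x
    obtain ⟨f, o, hx⟩ := aux_decomp x
    refine ⟨(f, -o), ?_⟩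
    show algebraMap K (FiniteAdeleRing R K) f -
      algebraMap (FiniteIntegralAdeles R K) (FiniteAdeleRing R K) (-o) = x
    rw [map_neg, sub_neg_eq_add, ← hx]
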